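/- For every integer n ≥ 0, the sum over all Dyck paths P of length 2n of 2^(number of downsteps of P that leave from even height) equals the number of little Schröder paths of length 2n. -/

import Mathlib

/-- A step of a Schröder path: upstep, downstep, or a *double* horizontal step. -/
inductive SchStep : Type
  | up : SchStep
  | down : SchStep
  | horiz : SchStep
deriving DecidableEq

/-- The number of unit steps a step occupies: `horiz` is a double horizontal step. -/
def SchStep.len : SchStep → ℕ
  | .up => 1
  | .down => 1
  | .horiz => 2

/-- The change in height produced by a step. -/
def SchStep.rise : SchStep → ℤ
  | .up => 1
  | .down => -1
  | .horiz => 0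

/-- The length of a path (a double horizontal step counts 2). -/
def pathLen (p : List SchStep) : ℕ := (p.map SchStep.len).sum

/-- The final height of a path started at height 0. -/
def pathHeight (p : List SchStep) : ℤ := (p.map SchStep.rise).sum

/-- A big Schröder path: ends at height 0 and never goes below the x-axis. -/
def IsBigSchroeder (p : List SchStep) : Prop :=
  pathHeight p = 0 ∧ ∀ q : List SchStep, q <+: p → 0 ≤ pathHeight q

/-- A little Schröder path: a big Schröder path with no double horizontal step at
height 0. -/
def IsLittleSchroeder (p : List SchStep) : Prop :=
  IsBigSchroeder p ∧ ∀ q r : List SchStep, p = q ++ SchStep.horiz :: r → pathHeight q ≠ 0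

/-- A Dyck path is a list of booleans: `true` is an upstep, `false` is a downstep. -/
def dyckHeight (p : List Bool) : ℤ := (p.map fun b => if b then (1 : ℤ) else -1).sum

/-- A Dyck path: ends at height 0 and never goes below the x-axis. -/
def IsDyck (p : List Bool) : Prop :=
  dyckHeight p = 0 ∧ ∀ q : List Bool, q <+: p → 0 ≤ dyckHeight q

/-- The number of downsteps of `p` leaving from even height. -/
def evenDownCount (p : List Bool) : ℕ :=
  (List.range p.length).countP fun i =>
    decide (p.getD i true = false ∧ dyckHeight (p.take i) % 2 = 0)

open List Finset

section Generic
variable {α : Type*}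

def ht (f : α → ℤ) (p : List α) : ℤ := (p.map f).sum

def NonNeg (f : α → ℤ) (p : List α) : Prop := ∀ k, 0 ≤ ht f (p.take k)

def Ret (f : α → ℤ) (p : List α) : Prop := ht f p = 0 ∧ NonNeg f p

variable {f : α → ℤ}

@[simp] lemma ht_nil : ht f [] = 0 := rfl
@[simp] lemma ht_cons (a : α) (p : List α) : ht f (a :: p) = f a + ht f p := by
  simp [ht]
@[simp] lemma ht_append (p q : List α) : ht f (p ++ q) = ht f p + ht f q := by
  simp [ht]

lemma ret_iff (p : List α) :
    (ht f p = 0 ∧ ∀ q, q <+: p → 0 ≤ ht f q) ↔ Ret f p := by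
  constructor
  · rintro ⟨h0, h⟩
    exact ⟨h0, fun k => h _ (List.take_prefix k p)⟩
  · rintro ⟨h0, h⟩
    refine ⟨h0, fun q hq => ?_⟩
    have := List.prefix_iff_eq_take.mp hq
    rw [this]; exact h q.length

lemma ret_glue {u d : α} (hu : f u = 1) (hd : f d = -1)
    {p1 p2 : List α} (h1 : Ret f p1) (h2 : Ret f p2) :
    Ret f (u :: p1 ++ d :: p2) := by
  obtain ⟨e1, n1⟩ := h1
  obtain ⟨e2, n2⟩ := h2
  constructor
  · simp [hu, hd, e1, e2]
  · intro k
    cases k with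
    | zero => simp
    | succ k =>
      rw [show (u :: p1 ++ d :: p2) = u :: (p1 ++ d :: p2) by simp,
        List.take_succ_cons, ht_cons, hu, List.take_append]
      rcases le_or_gt k p1.length with hk | hk
      · rw [Nat.sub_eq_zero_of_le hk]
        have := n1 k
        simp only [List.take_zero, List.append_nil]
        linarith
      · obtain ⟨j, hj⟩ : ∃ j, k - p1.length = j + 1 := ⟨k - p1.length - 1, by omega⟩
        rw [hj, List.take_succ_cons, List.take_of_length_le (by omega), ht_append, e1, ht_cons, hd]
        have := n2 j
        linarith

lemma ret_decomp {u d : α} (hu : f u = 1)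
    (hd : ∀ a : α, f a = -1 → a = d)
    (hall : ∀ a : α, f a = 1 ∨ f a = 0 ∨ f a = -1)
    {rest : List α} (h : Ret f (u :: rest)) :
    ∃ p1 p2, rest = p1 ++ d :: p2 ∧ Ret f p1 ∧ Ret f p2 := by
  classical
  set p := u :: rest with hp
  obtain ⟨e0, nn⟩ := h
  have hw : ∃ j, ht f (p.take (j + 1)) = 0 := by
    refine ⟨rest.length, ?_⟩
    rw [List.take_of_length_le (by simp [hp])]
    exact e0
  obtain ⟨m, hm, hmin⟩ : ∃ m, ht f (p.take (m + 1)) = 0 ∧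
      ∀ i < m, ht f (p.take (i + 1)) ≠ 0 :=
    ⟨Nat.find hw, Nat.find_spec hw, fun i hi => Nat.find_min hw hi⟩
  have hlt : ∀ i < m, 1 ≤ ht f (p.take (i + 1)) := by
    intro i hi
    have h1 := hmin i hi
    have h2 := nn (i + 1)
    omega
  have hmle : m ≤ rest.length := by
    by_contra hc
    push_neg at hc
    refine hmin rest.length hc ?_
    rw [List.take_of_length_le (by simp [hp])]
    exact e0
  have hm1 : 1 ≤ m := by
    by_contra hc
    push_neg at hc
    interval_cases m
    simp [hp, hu] at hm
  obtain ⟨m', rfl⟩ : ∃ m', m = m' + 1 := ⟨m - 1, by omega⟩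
  have hmlen : m' + 1 < p.length := by simp [hp]; omega
  have htake1 : ht f (p.take (m' + 1 + 1)) = ht f (p.take (m' + 1)) + f (p[m' + 1]'hmlen) := by
    rw [List.take_add, ht_append, List.drop_eq_getElem_cons hmlen]
    have h1 : List.take 1 ((p[m' + 1]'hmlen) :: p.drop (m' + 1 + 1)) = [p[m' + 1]'hmlen] := rfl
    rw [h1]
    simp
  have hge1 : 1 ≤ ht f (p.take (m' + 1)) := hlt m' (by omega)
  have hfd : f (p[m' + 1]'hmlen) = -1 ∧ ht f (p.take (m' + 1)) = 1 := by
    rcases hall (p[m' + 1]'hmlen) with h' | h' | h' <;> omega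
  have hdd : p[m' + 1]'hmlen = d := hd _ hfd.1
  refine ⟨rest.take m', rest.drop (m' + 1), ?_, ⟨?_, ?_⟩, ⟨?_, ?_⟩⟩
  · have hmr : m' < rest.length := by omega
    conv_lhs => rw [← List.take_append_drop m' rest]
    rw [List.drop_eq_getElem_cons hmr]
    congr 1
    have : rest[m'] = p[m' + 1]'hmlen := by simp [hp]
    rw [this, hdd]
  · have h' : p.take (m' + 1) = u :: rest.take m' := by simp [hp]
    rw [h', ht_cons, hu] at hfd
    linarith [hfd.2]
  · intro k
    rw [List.take_take]
    set j := min k m' with hj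
    have hjm : j ≤ m' := by omega
    have h' : p.take (j + 1) = u :: rest.take j := by simp [hp]
    have h1 : 1 ≤ ht f (p.take (j + 1)) := hlt j (by omega)
    rw [h', ht_cons, hu] at h1
    linarith
  · have hd2 : p.drop (m' + 1 + 1) = rest.drop (m' + 1) := by simp [hp]
    have hsplit : p = p.take (m' + 1 + 1) ++ rest.drop (m' + 1) := by
      rw [← hd2, List.take_append_drop]
    rw [hsplit, ht_append, hm] at e0
    linarith
  · intro k
    have h' : (rest.drop (m' + 1)).take k = (p.drop (m' + 1 + 1)).take k := by simp [hp]
    rw [h']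
    have h1 := nn (m' + 1 + 1 + k)
    rw [List.take_add, ht_append, hm] at h1
    linarith

lemma ret_unique {d : α} (hd : f d = -1)
    {p1 p2 q1 q2 : List α}
    (h1 : Ret f p1) (h2 : Ret f q1)
    (he : p1 ++ d :: p2 = q1 ++ d :: q2) : p1 = q1 ∧ p2 = q2 := by
  have key : ∀ a1 a2 b1 b2 : List α, Ret f a1 → Ret f b1 →
      a1 ++ d :: a2 = b1 ++ d :: b2 → ¬ (a1.length < b1.length) := by
    intro a1 a2 b1 b2 ha hb heq hlen
    have hlena : a1.length < (a1 ++ d :: a2).length := by simp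
    have hget2 : (a1 ++ d :: a2)[a1.length]'hlena = d := by
      rw [List.getElem_append_right (le_refl _)]
      simp
    have hbd : b1[a1.length]'hlen = d := by
      rw [← List.getElem_append_left (bs := d :: b2) hlen, ← List.getElem_of_eq heq hlena, hget2]
      simp only [List.length_append, List.length_cons]; omega
    have hpre : b1.take a1.length = a1 := by
      have h' : (a1 ++ d :: a2).take a1.length = (b1 ++ d :: b2).take a1.length := by rw [heq]
      rw [List.take_append, List.take_append,
        List.take_length, Nat.sub_self, Nat.sub_eq_zero_of_le (le_of_lt hlen)] at h'
      simpa using h'.symm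
    have hbad := hb.2 (a1.length + 1)
    rw [List.take_add, List.drop_eq_getElem_cons hlen, hbd] at hbad
    simp only [List.take_succ_cons, List.take_zero] at hbad
    rw [hpre, ht_append] at hbad
    simp [hd, ha.1] at hbad
  have hlen : p1.length = q1.length := by
    rcases lt_trichotomy p1.length q1.length with h | h | h
    · exact absurd h (key _ _ _ _ h1 h2 he)
    · exact h
    · exact absurd h (key _ _ _ _ h2 h1 he.symm)
  obtain ⟨h3, h4⟩ := List.append_inj he hlen
  exact ⟨h3, by injection h4⟩

lemma ht_parity (L : α → ℕ) (hL : ∀ a, f a % 2 = (L a : ℤ) % 2) (p : List α) :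
    ht f p % 2 = ((p.map L).sum : ℤ) % 2 := by
  induction p with
  | nil => simp
  | cons a t ih =>
    have := hL a
    simp only [ht_cons, List.map_cons, List.sum_cons, Nat.cast_add]
    omega

end Generic


-- ===== specialization =====

instance : Fintype SchStep :=
  ⟨{.up, .down, .horiz}, by intro x; cases x <;> simp⟩

def fB : Bool → ℤ := fun b => if b then 1 else -1

lemma dyckHeight_eq (p : List Bool) : dyckHeight p = ht fB p := rfl

lemma pathHeight_eq (p : List SchStep) : pathHeight p = ht SchStep.rise p := rfl

lemma isDyck_iff (p : List Bool) : IsDyck p ↔ Ret fB p := by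
  rw [← ret_iff]
  simp only [IsDyck, dyckHeight_eq]

lemma isBig_iff (p : List SchStep) : IsBigSchroeder p ↔ Ret SchStep.rise p := by
  rw [← ret_iff]
  simp only [IsBigSchroeder, pathHeight_eq]

-- decidability
lemma isDyck_iff_dec (p : List Bool) :
    (dyckHeight p = 0 ∧ ∀ k ∈ Finset.range (p.length + 1), 0 ≤ dyckHeight (p.take k)) ↔
      IsDyck p := by
  rw [isDyck_iff]
  constructor
  · rintro ⟨h0, h⟩
    refine ⟨h0, fun k => ?_⟩
    rcases le_or_gt k p.length with hk | hk
    · exact h k (Finset.mem_range.mpr (by omega))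
    · rw [List.take_of_length_le (by omega), ← dyckHeight_eq, h0]
  · rintro ⟨h0, h⟩
    exact ⟨h0, fun k _ => h k⟩

instance : DecidablePred IsDyck := fun p => decidable_of_iff _ (isDyck_iff_dec p)

lemma isBig_iff_dec (p : List SchStep) :
    (pathHeight p = 0 ∧ ∀ k ∈ Finset.range (p.length + 1), 0 ≤ pathHeight (p.take k)) ↔
      IsBigSchroeder p := by
  rw [isBig_iff]
  constructor
  · rintro ⟨h0, h⟩
    refine ⟨h0, fun k => ?_⟩
    rcases le_or_gt k p.length with hk | hk
    · exact h k (Finset.mem_range.mpr (by omega))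
    · rw [List.take_of_length_le (by omega), ← pathHeight_eq, h0]
  · rintro ⟨h0, h⟩
    exact ⟨h0, fun k _ => h k⟩

instance : DecidablePred IsBigSchroeder := fun p => decidable_of_iff _ (isBig_iff_dec p)

lemma little_iff (p : List SchStep) : IsLittleSchroeder p ↔ IsBigSchroeder p ∧
    ∀ k ∈ Finset.range p.length, p.getD k .up = SchStep.horiz → pathHeight (p.take k) ≠ 0 := by
  constructor
  · rintro ⟨hb, h⟩
    refine ⟨hb, fun k hk hh => ?_⟩
    have hk' : k < p.length := Finset.mem_range.mp hk
    refine h (p.take k) (p.drop (k + 1)) ?_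
    conv_lhs => rw [← List.take_append_drop k p]
    rw [List.drop_eq_getElem_cons hk']
    congr 2
    rw [List.getD_eq_getElem p _ hk'] at hh
    exact hh
  · rintro ⟨hb, h⟩
    refine ⟨hb, fun q r hqr => ?_⟩
    have hk' : q.length < p.length := by rw [hqr]; simp
    have h1 : p.getD q.length .up = SchStep.horiz := by
      rw [List.getD_eq_getElem p _ hk']
      have : p[q.length]'hk' = (q ++ SchStep.horiz :: r)[q.length]'(by rw [← hqr]; exact hk') :=
        List.getElem_of_eq hqr hk'
      rw [this, List.getElem_append_right (le_refl _)]
      simp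
    have h2 : p.take q.length = q := by
      rw [hqr, List.take_append, List.take_length, Nat.sub_self]
      simp
    have := h q.length (Finset.mem_range.mpr hk') h1
    rwa [h2] at this

instance : DecidablePred IsLittleSchroeder := fun p =>
  decidable_of_iff _ (little_iff p).symm

-- all lists of given length
def allL (α : Type*) [Fintype α] [DecidableEq α] : ℕ → Finset (List α)
  | 0 => {[]}
  | n + 1 => Finset.univ.biUnion fun a : α => ((allL α n).image (a :: ·))

lemma mem_allL {α : Type*} [Fintype α] [DecidableEq α] (n : ℕ) (p : List α) :
    p ∈ allL α n ↔ p.length = n := by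
  induction n generalizing p with
  | zero => cases p <;> simp [allL]
  | succ n ih =>
    cases p with
    | nil => simp [allL]
    | cons a t =>
      simp only [allL, Finset.mem_biUnion, Finset.mem_univ, Finset.mem_image, true_and,
        List.length_cons]
      constructor
      · rintro ⟨b, q, hq, he⟩
        injection he with h1 h2
        subst h2
        have := (ih q).mp hq
        omega
      · intro h
        exact ⟨a, t, (ih t).mpr (by omega), rfl⟩

-- ===== path finsets =====

def DyckF (m : ℕ) : Finset (List Bool) := (allL Bool m).filter IsDyck

def BigF (m : ℕ) : Finset (List SchStep) :=
  ((Finset.range (m + 1)).biUnion (allL SchStep)).filter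
    fun q => IsBigSchroeder q ∧ pathLen q = m

def LittleF (m : ℕ) : Finset (List SchStep) :=
  ((Finset.range (m + 1)).biUnion (allL SchStep)).filter
    fun q => IsLittleSchroeder q ∧ pathLen q = m

lemma mem_DyckF {m : ℕ} {p : List Bool} : p ∈ DyckF m ↔ IsDyck p ∧ p.length = m := by
  simp [DyckF, Finset.mem_filter, mem_allL, and_comm]

lemma length_le_pathLen (q : List SchStep) : q.length ≤ pathLen q := by
  induction q with
  | nil => simp [pathLen]
  | cons a t ih =>
    have : 1 ≤ a.len := by cases a <;> simp [SchStep.len]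
    simp only [pathLen, List.map_cons, List.sum_cons, List.length_cons] at *
    omega

lemma mem_BigF {m : ℕ} {q : List SchStep} :
    q ∈ BigF m ↔ IsBigSchroeder q ∧ pathLen q = m := by
  simp only [BigF, Finset.mem_filter, Finset.mem_biUnion, Finset.mem_range, mem_allL,
    and_iff_right_iff_imp]
  rintro ⟨_, hq⟩
  exact ⟨q.length, by have := length_le_pathLen q; omega, rfl⟩

lemma mem_LittleF {m : ℕ} {q : List SchStep} :
    q ∈ LittleF m ↔ IsLittleSchroeder q ∧ pathLen q = m := by
  simp only [LittleF, Finset.mem_filter, Finset.mem_biUnion, Finset.mem_range, mem_allL,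
    and_iff_right_iff_imp]
  rintro ⟨_, hq⟩
  exact ⟨q.length, by have := length_le_pathLen q; omega, rfl⟩

@[simp] lemma pathLen_nil : pathLen [] = 0 := rfl
@[simp] lemma pathLen_cons (a : SchStep) (p : List SchStep) :
    pathLen (a :: p) = a.len + pathLen p := by simp [pathLen]
@[simp] lemma pathLen_append (p q : List SchStep) :
    pathLen (p ++ q) = pathLen p + pathLen q := by simp [pathLen]

-- parity
lemma dyck_even_length {p : List Bool} (h : ht fB p = 0) : p.length % 2 = 0 := by
  have := ht_parity (f := fB) (fun _ => 1) (by intro a; cases a <;> simp [fB]) p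
  rw [h] at this
  have h2 : ((p.map fun _ => (1:ℕ)).sum : ℤ) = (p.length : ℤ) := by simp
  rw [h2] at this
  omega

lemma schroeder_even_pathLen {p : List SchStep} (h : ht SchStep.rise p = 0) :
    pathLen p % 2 = 0 := by
  have := ht_parity (f := SchStep.rise) SchStep.len
    (by intro a; cases a <;> simp [SchStep.rise, SchStep.len]) p
  rw [h] at this
  have h2 : ((p.map SchStep.len).sum : ℤ) = (pathLen p : ℤ) := by simp [pathLen]
  rw [h2] at this
  omega

-- ===== weight function =====

def wt : Bool → List Bool → ℕ
  | _, [] => 1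
  | b, (true :: t) => wt (!b) t
  | b, (false :: t) => (if b then 2 else 1) * wt (!b) t

@[simp] lemma wt_nil (b : Bool) : wt b [] = 1 := rfl

lemma dyckHeight_cons (a : Bool) (p : List Bool) :
    dyckHeight (a :: p) = fB a + dyckHeight p := by
  rw [dyckHeight_eq, ht_cons, ← dyckHeight_eq]

lemma wt_append (b : Bool) (l1 l2 : List Bool) :
    wt b (l1 ++ l2) = wt b l1 * wt (xor (decide (l1.length % 2 = 1)) b) l2 := by
  induction l1 generalizing b with
  | nil => simp
  | cons a t ih =>
    have hpar : xor (decide ((t.length + 1) % 2 = 1)) b = xor (decide (t.length % 2 = 1)) (!b) := by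
      rcases Nat.even_or_odd t.length with h | h
      · obtain ⟨c, hc⟩ := h
        have h1 : t.length % 2 = 0 := by omega
        have h2 : (t.length + 1) % 2 = 1 := by omega
        simp [h1, h2]
      · obtain ⟨c, hc⟩ := h
        have h1 : t.length % 2 = 1 := by omega
        have h2 : (t.length + 1) % 2 = 0 := by omega
        simp [h1, h2]
    cases a
    · simp only [List.cons_append, wt, List.append_eq, List.length_cons]
      rw [ih, hpar]
      ring
    · simp only [List.cons_append, wt, List.append_eq, List.length_cons]
      rw [ih, hpar]

lemma wt_eq_pow (p : List Bool) : ∀ (h : ℤ) (b : Bool), b = decide (h % 2 = 0) →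
    wt b p = 2 ^ ((List.range p.length).countP fun i =>
      decide (p.getD i true = false ∧ (h + dyckHeight (p.take i)) % 2 = 0)) := by
  induction p with
  | nil => intro h b hb; simp
  | cons a t ih =>
    intro h b hb
    rw [List.length_cons, List.range_succ_eq_map, List.countP_cons, List.countP_map]
    have hcomp : ((fun i => decide ((a :: t).getD i true = false ∧
          (h + dyckHeight ((a :: t).take i)) % 2 = 0)) ∘ Nat.succ)
        = fun i => decide (t.getD i true = false ∧
          ((h + fB a) + dyckHeight (t.take i)) % 2 = 0) := by
      funext i
      simp only [Function.comp_apply, Nat.succ_eq_add_one, List.getD_cons_succ,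
        List.take_succ_cons, dyckHeight_cons, add_assoc]
    have hb' : (!b) = decide ((h + fB a) % 2 = 0) := by
      rcases Int.emod_two_eq h with h' | h' <;> cases a <;> subst hb <;>
        simp [fB, h'] <;> omega
    have hrec := ih (h + fB a) (!b) hb'
    have hzero : decide ((a :: t).getD 0 true = false ∧
        (h + dyckHeight ((a :: t).take 0)) % 2 = 0) = (!a && b) := by
      subst hb
      cases a <;> simp [dyckHeight]
    rw [hcomp, hzero, pow_add, ← hrec]
    cases a <;> cases b <;> simp [wt, pow_succ, mul_comm]

@[simp] lemma wt_true_cons (b : Bool) (t : List Bool) : wt b (true :: t) = wt (!b) t := rfl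
@[simp] lemma wt_false_cons (b : Bool) (t : List Bool) :
    wt b (false :: t) = (if b then 2 else 1) * wt (!b) t := rfl

lemma pow_evenDownCount (p : List Bool) : 2 ^ evenDownCount p = wt true p := by
  rw [wt_eq_pow p 0 true (by simp)]
  unfold evenDownCount
  congr 1
  refine List.countP_congr fun i _ => ?_
  simp

lemma wt_glue (b : Bool) (p1 p2 : List Bool) (h : p1.length % 2 = 0) :
    wt b (true :: p1 ++ false :: p2) = (if b then 1 else 2) * (wt (!b) p1 * wt b p2) := by
  have h1 : decide (p1.length % 2 = 1) = false := by simp; omega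
  show wt b (true :: (p1 ++ false :: p2)) = _
  rw [wt_true_cons, wt_append, h1, Bool.false_xor, wt_false_cons, Bool.not_not]
  cases b <;> simp <;> ring

lemma dyck_rec (b : Bool) (n : ℕ) :
    (∑ p ∈ DyckF (2 * (n + 1)), wt b p) =
      (if b then 1 else 2) * ∑ k ∈ Finset.range (n + 1),
        (∑ p ∈ DyckF (2 * k), wt (!b) p) * (∑ p ∈ DyckF (2 * (n - k)), wt b p) := by
  have main : ∑ x ∈ ((Finset.range (n + 1)).sigma fun k => DyckF (2 * k) ×ˢ DyckF (2 * (n - k))),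
      ((if b then 1 else 2) * (wt (!b) x.2.1 * wt b x.2.2))
      = ∑ p ∈ DyckF (2 * (n + 1)), wt b p := by
    refine Finset.sum_bij (fun x _ => true :: x.2.1 ++ false :: x.2.2) ?_ ?_ ?_ ?_
    · rintro ⟨k, p1, p2⟩ hx
      simp only [Finset.mem_sigma, Finset.mem_product, Finset.mem_range] at hx
      obtain ⟨hk, h1, h2⟩ := hx
      rw [mem_DyckF] at h1 h2 ⊢
      obtain ⟨hd1, hl1⟩ := h1
      obtain ⟨hd2, hl2⟩ := h2
      refine ⟨(isDyck_iff _).mpr (ret_glue (f := fB) (u := true) (d := false) rfl rfl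
        ((isDyck_iff _).mp hd1) ((isDyck_iff _).mp hd2)), ?_⟩
      simp only [List.length_cons, List.length_append]
      omega
    · rintro ⟨k1, p1, p2⟩ h1 ⟨k2, q1, q2⟩ h2 heq
      simp only [Finset.mem_sigma, Finset.mem_product, Finset.mem_range] at h1 h2
      simp only [List.cons_append] at heq
      injection heq with _ heq2
      obtain ⟨he1, he2⟩ := ret_unique (f := fB) (d := false) rfl
        ((isDyck_iff _).mp (mem_DyckF.mp h1.2.1).1)
        ((isDyck_iff _).mp (mem_DyckF.mp h2.2.1).1) heq2
      have hk : k1 = k2 := by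
        have l1 := (mem_DyckF.mp h1.2.1).2
        have l2 := (mem_DyckF.mp h2.2.1).2
        rw [he1] at l1
        omega
      subst hk
      subst he1
      subst he2
      rfl
    · intro p hp
      rw [mem_DyckF] at hp
      obtain ⟨hd, hl⟩ := hp
      have hret := (isDyck_iff _).mp hd
      obtain ⟨a, rest, rfl⟩ : ∃ a rest, p = a :: rest := by
        cases p with
        | nil => simp at hl
        | cons a rest => exact ⟨a, rest, rfl⟩
      obtain rfl : a = true := by
        cases a
        · exfalso
          have := hret.2 1
          simp [fB] at this
        · rfl
      obtain ⟨p1, p2, hrest, hr1, hr2⟩ := ret_decomp (u := true) (d := false) rfl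
        (fun a ha => by cases a <;> simp [fB] at ha ⊢)
        (fun a => by cases a <;> simp [fB]) hret
      have hev : p1.length % 2 = 0 := dyck_even_length hr1.1
      have hlen : p1.length + p2.length + 2 = 2 * (n + 1) := by
        rw [hrest] at hl
        simp at hl
        omega
      refine ⟨⟨p1.length / 2, p1, p2⟩, ?_, ?_⟩
      · simp only [Finset.mem_sigma, Finset.mem_product, Finset.mem_range]
        refine ⟨by omega, mem_DyckF.mpr ⟨(isDyck_iff _).mpr hr1, by omega⟩,
          mem_DyckF.mpr ⟨(isDyck_iff _).mpr hr2, by omega⟩⟩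
      · simp [hrest]
    · rintro ⟨k, p1, p2⟩ hx
      simp only [Finset.mem_sigma, Finset.mem_product, Finset.mem_range] at hx
      have hev : p1.length % 2 = 0 := by
        have := (mem_DyckF.mp hx.2.1).2
        omega
      exact (wt_glue b p1 p2 hev).symm
  rw [← main, Finset.sum_sigma]
  rw [Finset.mul_sum]
  refine Finset.sum_congr rfl fun k hk => ?_
  rw [Finset.sum_product, Finset.sum_mul_sum, Finset.mul_sum]
  refine Finset.sum_congr rfl fun p1 _ => ?_
  rw [Finset.mul_sum]

@[simp] lemma rise_up : SchStep.rise .up = 1 := rfl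
@[simp] lemma rise_down : SchStep.rise .down = -1 := rfl
@[simp] lemma rise_horiz : SchStep.rise .horiz = 0 := rfl
@[simp] lemma len_up : SchStep.len .up = 1 := rfl
@[simp] lemma len_down : SchStep.len .down = 1 := rfl
@[simp] lemma len_horiz : SchStep.len .horiz = 2 := rfl

lemma little_rec (n : ℕ) :
    (LittleF (2 * (n + 1))).card =
      ∑ k ∈ Finset.range (n + 1), (BigF (2 * k)).card * (LittleF (2 * (n - k))).card := by
  have main : ((Finset.range (n + 1)).sigma
      fun k => BigF (2 * k) ×ˢ LittleF (2 * (n - k))).card = (LittleF (2 * (n + 1))).card := by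
    refine Finset.card_bij (fun x _ => SchStep.up :: x.2.1 ++ SchStep.down :: x.2.2) ?_ ?_ ?_
    · rintro ⟨k, p1, p2⟩ hx
      simp only [Finset.mem_sigma, Finset.mem_product, Finset.mem_range] at hx
      obtain ⟨hk, h1, h2⟩ := hx
      obtain ⟨hb1, hl1⟩ := mem_BigF.mp h1
      obtain ⟨⟨hb2, hh2⟩, hl2⟩ := mem_LittleF.mp h2
      have h0 : ht SchStep.rise p1 = 0 := ((isBig_iff _).mp hb1).1
      refine mem_LittleF.mpr ⟨⟨?_, ?_⟩, ?_⟩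
      · exact (isBig_iff _).mpr (ret_glue (f := SchStep.rise) (u := .up) (d := .down) rfl rfl
          ((isBig_iff _).mp hb1) ((isBig_iff _).mp hb2))
      · intro q r hqr
        cases q with
        | nil =>
          simp only [List.nil_append] at hqr
          injection hqr with h' _
          exact absurd h' (by decide)
        | cons a q' =>
          simp only [List.cons_append] at hqr
          injection hqr with ha hrest
          subst ha
          rcases List.append_eq_append_iff.mp hrest with ⟨a', ha1, ha2⟩ | ⟨c', hc1, hc2⟩
          · cases a' with
            | nil =>
              simp only [List.nil_append] at ha2
              injection ha2 with h' _
              exact absurd h' (by decide)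
            | cons x a'' =>
              injection ha2 with hx2 hrest2
              subst hx2
              subst ha1
              have hne := hh2 a'' r hrest2
              intro hcon
              apply hne
              rw [pathHeight_eq] at hcon ⊢
              simp only [List.cons_append, ht_cons, ht_append, h0, rise_up, rise_down] at hcon
              omega
          · cases c' with
            | nil =>
              simp only [List.nil_append] at hc2
              injection hc2 with h' _
              exact absurd h' (by decide)
            | cons y c'' =>
              injection hc2 with hy _
              subst hy
              have hq' : 0 ≤ pathHeight q' := hb1.2 q' ⟨SchStep.horiz :: c'', hc1.symm⟩
              rw [pathHeight_eq] at hq' ⊢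
              simp only [ht_cons, rise_up]
              omega
      · have h1 := schroeder_even_pathLen h0
        simp only [List.cons_append, pathLen_cons, pathLen_append, len_up, len_down]
        omega
    · rintro ⟨k1, p1, p2⟩ h1 ⟨k2, q1, q2⟩ h2 heq
      simp only [Finset.mem_sigma, Finset.mem_product, Finset.mem_range] at h1 h2
      simp only [List.cons_append] at heq
      injection heq with _ heq2
      obtain ⟨he1, he2⟩ := ret_unique (f := SchStep.rise) (d := .down) rfl
        ((isBig_iff _).mp (mem_BigF.mp h1.2.1).1)
        ((isBig_iff _).mp (mem_BigF.mp h2.2.1).1) heq2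
      have hk : k1 = k2 := by
        have l1 := (mem_BigF.mp h1.2.1).2
        have l2 := (mem_BigF.mp h2.2.1).2
        rw [he1] at l1
        omega
      subst hk
      subst he1
      subst he2
      rfl
    · intro p hp
      obtain ⟨⟨hb, hh⟩, hl⟩ := mem_LittleF.mp hp
      have hret := (isBig_iff _).mp hb
      obtain ⟨a, rest, rfl⟩ : ∃ a rest, p = a :: rest := by
        cases p with
        | nil => simp at hl
        | cons a rest => exact ⟨a, rest, rfl⟩
      obtain rfl : a = SchStep.up := by
        cases a
        · rfl
        · exfalso
          have := hret.2 1
          simp [ht] at this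
        · exact absurd (hh [] rest rfl) (by simp [pathHeight])
      obtain ⟨p1, p2, hrest, hr1, hr2⟩ := ret_decomp (u := SchStep.up) (d := SchStep.down) rfl
        (fun a ha => by cases a <;> simp at ha ⊢)
        (fun a => by cases a <;> simp) hret
      have hev : pathLen p1 % 2 = 0 := schroeder_even_pathLen hr1.1
      have hlen : pathLen p1 + pathLen p2 + 2 = 2 * (n + 1) := by
        rw [hrest] at hl
        simp only [pathLen_cons, pathLen_append, len_up, len_down] at hl
        omega
      have hlittle2 : IsLittleSchroeder p2 := by
        refine ⟨(isBig_iff _).mpr hr2, fun q r hqr => ?_⟩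
        have hdecomp : SchStep.up :: rest = (SchStep.up :: p1 ++ SchStep.down :: q) ++
            SchStep.horiz :: r := by
          rw [hrest, hqr]
          simp
        have hne := hh _ _ hdecomp
        intro hcon
        apply hne
        rw [pathHeight_eq] at hcon ⊢
        simp only [List.cons_append, ht_cons, ht_append, hr1.1, rise_up, rise_down]
        omega
      refine ⟨⟨pathLen p1 / 2, p1, p2⟩, ?_, ?_⟩
      · simp only [Finset.mem_sigma, Finset.mem_product, Finset.mem_range]
        refine ⟨by omega, mem_BigF.mpr ⟨(isBig_iff _).mpr hr1, by omega⟩,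
          mem_LittleF.mpr ⟨hlittle2, by omega⟩⟩
      · simp [hrest]
  rw [← main, Finset.card_sigma]
  refine Finset.sum_congr rfl fun k hk => ?_
  rw [Finset.card_product]

lemma big_rec (n : ℕ) :
    (BigF (2 * (n + 1))).card = (BigF (2 * n)).card +
      ∑ k ∈ Finset.range (n + 1), (BigF (2 * k)).card * (BigF (2 * (n - k))).card := by
  have main : ((BigF (2 * n)).disjSum ((Finset.range (n + 1)).sigma
      fun k => BigF (2 * k) ×ˢ BigF (2 * (n - k)))).card = (BigF (2 * (n + 1))).card := by
    refine Finset.card_bij (fun x _ => Sum.elim (fun p => SchStep.horiz :: p)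
      (fun y => SchStep.up :: y.2.1 ++ SchStep.down :: y.2.2) x) ?_ ?_ ?_
    · rintro (p | ⟨k, p1, p2⟩) hx
      · rw [Finset.inl_mem_disjSum] at hx
        obtain ⟨hb, hl⟩ := mem_BigF.mp hx
        have hret := (isBig_iff _).mp hb
        simp only [Sum.elim_inl]
        refine mem_BigF.mpr ⟨(isBig_iff _).mpr ⟨?_, ?_⟩, ?_⟩
        · simp [hret.1]
        · intro k
          cases k with
          | zero => simp
          | succ k =>
            rw [List.take_succ_cons, ht_cons, rise_horiz]
            have := hret.2 k
            omega
        · simp only [Sum.elim_inl, pathLen_cons, len_horiz]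
          omega
      · rw [Finset.inr_mem_disjSum] at hx
        simp only [Finset.mem_sigma, Finset.mem_product, Finset.mem_range] at hx
        obtain ⟨hk, h1, h2⟩ := hx
        obtain ⟨hb1, hl1⟩ := mem_BigF.mp h1
        obtain ⟨hb2, hl2⟩ := mem_BigF.mp h2
        refine mem_BigF.mpr ⟨(isBig_iff _).mpr (ret_glue (f := SchStep.rise)
          (u := .up) (d := .down) rfl rfl ((isBig_iff _).mp hb1) ((isBig_iff _).mp hb2)), ?_⟩
        simp only [Sum.elim_inr, List.cons_append, pathLen_cons, pathLen_append, len_up, len_down]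
        omega
    · rintro (p | ⟨k1, p1, p2⟩) h1 (q | ⟨k2, q1, q2⟩) h2 heq
      · simp only [Sum.elim_inl] at heq
        injection heq with _ h'
        rw [h']
      · simp only [Sum.elim_inl, Sum.elim_inr, List.cons_append] at heq
        injection heq with h' _
        exact absurd h' (by decide)
      · simp only [Sum.elim_inl, Sum.elim_inr, List.cons_append] at heq
        injection heq with h' _
        exact absurd h' (by decide)
      · rw [Finset.inr_mem_disjSum] at h1 h2
        simp only [Finset.mem_sigma, Finset.mem_product, Finset.mem_range] at h1 h2
        simp only [Sum.elim_inr, List.cons_append] at heq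
        injection heq with _ heq2
        obtain ⟨he1, he2⟩ := ret_unique (f := SchStep.rise) (d := .down) rfl
          ((isBig_iff _).mp (mem_BigF.mp h1.2.1).1)
          ((isBig_iff _).mp (mem_BigF.mp h2.2.1).1) heq2
        have hk : k1 = k2 := by
          have l1 := (mem_BigF.mp h1.2.1).2
          have l2 := (mem_BigF.mp h2.2.1).2
          rw [he1] at l1
          omega
        subst hk
        subst he1
        subst he2
        rfl
    · intro p hp
      obtain ⟨hb, hl⟩ := mem_BigF.mp hp
      have hret := (isBig_iff _).mp hb
      obtain ⟨a, rest, rfl⟩ : ∃ a rest, p = a :: rest := by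
        cases p with
        | nil => simp at hl
        | cons a rest => exact ⟨a, rest, rfl⟩
      cases a with
      | down =>
        exfalso
        have := hret.2 1
        simp [ht] at this
      | horiz =>
        have hrb : IsBigSchroeder rest := by
          refine (isBig_iff _).mpr ⟨?_, ?_⟩
          · have := hret.1
            simp only [ht_cons, rise_horiz] at this
            omega
          · intro k
            have := hret.2 (k + 1)
            rw [List.take_succ_cons, ht_cons, rise_horiz] at this
            omega
        refine ⟨Sum.inl rest, ?_, ?_⟩
        · rw [Finset.inl_mem_disjSum]
          refine mem_BigF.mpr ⟨hrb, ?_⟩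
          simp only [pathLen_cons, len_horiz] at hl
          omega
        · simp
      | up =>
        obtain ⟨p1, p2, hrest, hr1, hr2⟩ := ret_decomp (u := SchStep.up) (d := SchStep.down) rfl
          (fun a ha => by cases a <;> simp at ha ⊢)
          (fun a => by cases a <;> simp) hret
        have hev : pathLen p1 % 2 = 0 := schroeder_even_pathLen hr1.1
        have hlen : pathLen p1 + pathLen p2 + 2 = 2 * (n + 1) := by
          rw [hrest] at hl
          simp only [pathLen_cons, pathLen_append, len_up, len_down] at hl
          omega
        refine ⟨Sum.inr ⟨pathLen p1 / 2, p1, p2⟩, ?_, ?_⟩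
        · rw [Finset.inr_mem_disjSum]
          simp only [Finset.mem_sigma, Finset.mem_product, Finset.mem_range]
          refine ⟨by omega, mem_BigF.mpr ⟨(isBig_iff _).mpr hr1, by omega⟩,
            mem_BigF.mpr ⟨(isBig_iff _).mpr hr2, by omega⟩⟩
        · simp [hrest]
  rw [← main, Finset.card_disjSum, Finset.card_sigma]
  refine congrArg _ (Finset.sum_congr rfl fun k hk => ?_)
  rw [Finset.card_product]

def Aw (n : ℕ) : ℕ := ∑ p ∈ DyckF (2 * n), wt true p
def Bw (n : ℕ) : ℕ := ∑ p ∈ DyckF (2 * n), wt false p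
def Sc (n : ℕ) : ℕ := (LittleF (2 * n)).card
def Rb (n : ℕ) : ℕ := (BigF (2 * n)).card

lemma DyckF_zero : DyckF 0 = {[]} := by
  ext p
  rw [mem_DyckF, Finset.mem_singleton]
  constructor
  · rintro ⟨_, h⟩
    exact List.length_eq_zero_iff.mp h
  · rintro rfl
    exact ⟨⟨by simp [dyckHeight], fun q hq => by
      rw [List.prefix_nil.mp hq]; simp [dyckHeight]⟩, rfl⟩

lemma pathLen_eq_zero {q : List SchStep} (h : pathLen q = 0) : q = [] := by
  cases q with
  | nil => rfl
  | cons a t =>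
    exfalso
    have : 1 ≤ a.len := by cases a <;> simp
    simp only [pathLen_cons] at h
    omega

lemma LittleF_zero : LittleF 0 = {[]} := by
  ext q
  rw [mem_LittleF, Finset.mem_singleton]
  constructor
  · rintro ⟨_, h⟩
    exact pathLen_eq_zero h
  · rintro rfl
    refine ⟨⟨⟨by simp [pathHeight], fun q hq => by
      rw [List.prefix_nil.mp hq]; simp [pathHeight]⟩, fun q r h => ?_⟩, rfl⟩
    exact absurd h.symm (by simp)

lemma BigF_zero : BigF 0 = {[]} := by
  ext q
  rw [mem_BigF, Finset.mem_singleton]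
  constructor
  · rintro ⟨_, h⟩
    exact pathLen_eq_zero h
  · rintro rfl
    exact ⟨⟨by simp [pathHeight], fun q hq => by
      rw [List.prefix_nil.mp hq]; simp [pathHeight]⟩, rfl⟩

lemma Aw_zero : Aw 0 = 1 := by simp [Aw, DyckF_zero]
lemma Bw_zero : Bw 0 = 1 := by simp [Bw, DyckF_zero]
lemma Sc_zero : Sc 0 = 1 := by simp [Sc, LittleF_zero]
lemma Rb_zero : Rb 0 = 1 := by simp [Rb, BigF_zero]

lemma hA (m : ℕ) : Aw (m + 1) = ∑ k ∈ Finset.range (m + 1), Bw k * Aw (m - k) := by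
  have := dyck_rec true m
  simpa [Aw, Bw] using this

lemma hB (m : ℕ) : Bw (m + 1) = 2 * ∑ k ∈ Finset.range (m + 1), Aw k * Bw (m - k) := by
  have := dyck_rec false m
  simpa [Aw, Bw] using this

lemma hS (m : ℕ) : Sc (m + 1) = ∑ k ∈ Finset.range (m + 1), Rb k * Sc (m - k) :=
  little_rec m

lemma hR (m : ℕ) : Rb (m + 1) = Rb m + ∑ k ∈ Finset.range (m + 1), Rb k * Rb (m - k) :=
  big_rec m

lemma R_two (n : ℕ) : Rb (n + 1) = 2 * Sc (n + 1) := by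
  induction n using Nat.strong_induction_on with
  | _ n ih =>
    have hcong : ∑ k ∈ Finset.range n, Rb k * Rb (n - k)
        = 2 * ∑ k ∈ Finset.range n, Rb k * Sc (n - k) := by
      rw [Finset.mul_sum]
      refine Finset.sum_congr rfl fun k hk => ?_
      have hk' : k < n := Finset.mem_range.mp hk
      have h2 : n - k = (n - k - 1) + 1 := by omega
      rw [h2, ih (n - k - 1) (by omega)]
      ring
    rw [hR n, hS n, Finset.sum_range_succ, Finset.sum_range_succ
      (f := fun k => Rb k * Sc (n - k)), hcong, Nat.sub_self, Rb_zero, Sc_zero]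
    ring

lemma main_eq (n : ℕ) : Aw n = Sc n ∧ Bw n = Rb n := by
  induction n using Nat.strong_induction_on with
  | _ n ih =>
    cases n with
    | zero => exact ⟨by rw [Aw_zero, Sc_zero], by rw [Bw_zero, Rb_zero]⟩
    | succ m =>
      constructor
      · rw [hA m, hS m]
        refine Finset.sum_congr rfl fun k hk => ?_
        have hk' := Finset.mem_range.mp hk
        rw [(ih k (by omega)).2, (ih (m - k) (by omega)).1]
      · have e1 : ∑ k ∈ Finset.range (m + 1), Aw k * Bw (m - k)
            = ∑ k ∈ Finset.range (m + 1), Sc k * Rb (m - k) := by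
          refine Finset.sum_congr rfl fun k hk => ?_
          have hk' := Finset.mem_range.mp hk
          rw [(ih k (by omega)).1, (ih (m - k) (by omega)).2]
        have e2 : ∑ k ∈ Finset.range m, Rb (k + 1) * Rb (m - (k + 1))
            = 2 * ∑ k ∈ Finset.range m, Sc (k + 1) * Rb (m - (k + 1)) := by
          rw [Finset.mul_sum]
          refine Finset.sum_congr rfl fun k hk => ?_
          rw [R_two k]
          ring
        rw [hB m, e1, hR m,
          Finset.sum_range_succ' (fun k => Sc k * Rb (m - k)) m,
          Finset.sum_range_succ' (fun k => Rb k * Rb (m - k)) m,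
          e2, Sc_zero, Rb_zero, Nat.sub_zero]
        ring


/-- The total weight of Dyck paths of length `2n`, where each path is weighted by
`2 ^ (number of downsteps from even height)`, equals the number of little Schröder
paths of length `2n`. -/
theorem weighted_dyck_eq_little_schroeder (n : ℕ) :
    (∑ᶠ p ∈ {p : List Bool | IsDyck p ∧ p.length = 2 * n}, 2 ^ evenDownCount p) =
      Nat.card {q : List SchStep // IsLittleSchroeder q ∧ pathLen q = 2 * n} := by

  have hset1 : {p : List Bool | IsDyck p ∧ p.length = 2 * n} = ↑(DyckF (2 * n)) := by
    ext p
    simp [mem_DyckF]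
  rw [hset1, finsum_mem_coe_finset]
  have hsum : ∑ p ∈ DyckF (2 * n), 2 ^ evenDownCount p = Aw n :=
    Finset.sum_congr rfl fun p _ => pow_evenDownCount p
  rw [hsum]
  have hset2 : {q : List SchStep | IsLittleSchroeder q ∧ pathLen q = 2 * n}
      = ↑(LittleF (2 * n)) := by
    ext q
    simp [mem_LittleF]
  have hcard : Nat.card {q : List SchStep // IsLittleSchroeder q ∧ pathLen q = 2 * n} = Sc n :=
    calc Nat.card {q : List SchStep // IsLittleSchroeder q ∧ pathLen q = 2 * n}
        = ({q : List SchStep | IsLittleSchroeder q ∧ pathLen q = 2 * n} : Set _).ncard :=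
          Nat.card_coe_set_eq _
      _ = Sc n := by rw [hset2, Set.ncard_coe_finset]; rfl
  rw [hcard, (main_eq n).1]
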